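/- Let 0 < s < 1, m > 0, f ∈ C²_b(ℝ^N), and define H^s_m(f,f)(x) = (−Δ+m²)^s(f²)(x) − 2f(x)(−Δ+m²)^s f(x) via the pointwise singular-integral definition of (−Δ+m²)^s. Then H^s_m(f,f)(x) = −C_{N,s} m^{(N+2s)/2} ∫_{ℝ^N} (f(x)−f(y))² |x−y|^{−(N+2s)/2} K_{(N+2s)/2}(m|x−y|) dy − m^{2s} f(x)² ≤ 0 for all x; in particular the pointwise inequality (−Δ+m²)^s(f²)(x) ≤ 2f(x)(−Δ+m²)^s f(x) holds. -/

import Mathlib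

open MeasureTheory Real Set Filter
open scoped RealInnerProductSpace
open scoped ENNReal NNReal Topology

/-- The Macdonald function (modified Bessel function of the second kind),
via the Sommerfeld integral representation. -/
noncomputable def besselK (ν z : ℝ) : ℝ :=
  2 ^ (-ν - 1) * z ^ ν * ∫ t in Set.Ioi (0 : ℝ), Real.exp (-(t + z ^ 2 / (4 * t))) * t ^ (-ν - 1)

/-- The normalization constant C_{N,s}. -/
noncomputable def CNs (N : ℕ) (s : ℝ) : ℝ :=
  -(2 ^ (1 + s - (N : ℝ) / 2)) / (π ^ ((N : ℝ) / 2) * Real.Gamma (-s))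

/-- `fracRelPVAt N s m f x L` means that `(−Δ+m²)^s f (x) = L`, where the operator is given by
the pointwise principal-value singular-integral definition
`(−Δ+m²)^s f(x) = C_{N,s} m^{(N+2s)/2} P.V. ∫ (f(x)−f(y)) |x−y|^{−(N+2s)/2}
K_{(N+2s)/2}(m|x−y|) dy + m^{2s} f(x)`. -/
def fracRelPVAt (N : ℕ) (s m : ℝ) (f : EuclideanSpace ℝ (Fin N) → ℝ)
    (x : EuclideanSpace ℝ (Fin N)) (L : ℝ) : Prop :=
  Filter.Tendsto
    (fun ε : ℝ => CNs N s * m ^ (((N : ℝ) + 2 * s) / 2) *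
      ∫ y in {y : EuclideanSpace ℝ (Fin N) | ε < dist x y},
        (f x - f y) * dist x y ^ (-(((N : ℝ) + 2 * s) / 2)) *
          besselK (((N : ℝ) + 2 * s) / 2) (m * dist x y))
    (nhdsWithin 0 (Set.Ioi 0)) (nhds (L - m ^ (2 * s) * f x))

lemma besselK_nonneg (ν : ℝ) {z : ℝ} (hz : 0 ≤ z) : 0 ≤ besselK ν z := by
  apply mul_nonneg (mul_nonneg (by positivity) (Real.rpow_nonneg hz ν))
  apply setIntegral_nonneg measurableSet_Ioi
  intro t ht
  have : (0:ℝ) < t := ht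
  positivity

lemma CNs_pos {N : ℕ} {s : ℝ} (hs0 : 0 < s) (hs1 : s < 1) : 0 < CNs N s := by
  have hG1 : 0 < Real.Gamma (-s + 1) := Real.Gamma_pos_of_pos (by linarith)
  have hG : Real.Gamma (-s + 1) = -s * Real.Gamma (-s) :=
    Real.Gamma_add_one (by linarith)
  have hGneg : Real.Gamma (-s) < 0 := by nlinarith
  have h2 : (0:ℝ) < 2 ^ (1 + s - (N : ℝ) / 2) := Real.rpow_pos_of_pos two_pos _
  have hπ : (0:ℝ) < π ^ ((N : ℝ) / 2) := Real.rpow_pos_of_pos Real.pi_pos _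
  rw [CNs, div_pos_iff]
  right
  exact ⟨by linarith, mul_neg_of_pos_of_neg hπ hGneg⟩

lemma besselK_measurable (ν : ℝ) : Measurable (besselK ν) := by
  have h1 : StronglyMeasurable (Function.uncurry fun z t : ℝ =>
      Real.exp (-(t + z ^ 2 / (4 * t))) * t ^ (-ν - 1)) := by
    apply Measurable.stronglyMeasurable
    apply Measurable.mul
    · exact (((measurable_snd).add ((measurable_fst.pow measurable_const).div
        (measurable_const.mul measurable_snd))).neg).exp
    · exact measurable_snd.pow measurable_const
  have h2 : Measurable fun z : ℝ =>
      ∫ t in Set.Ioi (0:ℝ), Real.exp (-(t + z ^ 2 / (4 * t))) * t ^ (-ν - 1) :=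
    (h1.integral_prod_right').measurable
  exact (measurable_const.mul (measurable_id.pow measurable_const)).mul h2

lemma exp_rpow_bound {p : ℝ} (hp : 0 < p) {u : ℝ} (hu : 0 ≤ u) :
    Real.exp (-u) * u ^ p ≤ p ^ p := by
  rcases eq_or_lt_of_le hu with h | hu
  · rw [← h, Real.zero_rpow hp.ne', mul_zero]
    positivity
  · have h1 : u / p ≤ Real.exp (u / p) := by
      have := Real.add_one_le_exp (u / p)
      linarith
    have h2 : (u / p) ^ p ≤ (Real.exp (u / p)) ^ p :=
      Real.rpow_le_rpow (by positivity) h1 hp.le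
    have h3 : (Real.exp (u / p)) ^ p = Real.exp u := by
      rw [← Real.exp_one_rpow (u / p), ← Real.rpow_mul (Real.exp_pos 1).le,
        div_mul_cancel₀ _ hp.ne', Real.exp_one_rpow]
    have h4 : u ^ p = (u / p) ^ p * p ^ p := by
      rw [← Real.mul_rpow (by positivity) hp.le, div_mul_cancel₀ _ hp.ne']
    rw [h4]
    calc Real.exp (-u) * ((u / p) ^ p * p ^ p)
        ≤ Real.exp (-u) * (Real.exp u * p ^ p) := by
          apply mul_le_mul_of_nonneg_left _ (Real.exp_pos _).le
          apply mul_le_mul_of_nonneg_right (h2.trans (le_of_eq h3)) (by positivity)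
      _ = p ^ p := by rw [← mul_assoc, ← Real.exp_add]; simp

lemma besselK_le_rpow {ν : ℝ} (hν : 0 < ν) :
    ∃ C : ℝ, 0 < C ∧ ∀ z : ℝ, 0 < z → besselK ν z ≤ C * z ^ (-ν) := by
  set p : ℝ := ν + 1 with hp_def
  have hp : 0 < p := by linarith
  set K₁ : ℝ := p ^ p with hK₁_def
  have hK₁ : 0 < K₁ := Real.rpow_pos_of_pos hp _
  refine ⟨2 ^ (-ν - 1) * ((K₁ + 1 / ν) * 4 ^ ν), by positivity, ?_⟩
  intro z hz
  set c : ℝ := z ^ 2 / 4 with hc_def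
  have hc : 0 < c := by positivity
  set φ : ℝ → ℝ := fun t => Real.exp (-(t + z ^ 2 / (4 * t))) * t ^ (-ν - 1) with hφ_def
  have hφ_nonneg : ∀ t ∈ Ioi (0:ℝ), 0 ≤ φ t := by
    intro t ht
    have : (0:ℝ) < t := ht
    positivity
  have hφ_meas : Measurable φ := by
    apply Measurable.mul
    · exact ((measurable_id.add (measurable_const.div
        (measurable_const.mul measurable_id))).neg).exp
    · exact measurable_id.pow measurable_const
  have hct : ∀ t : ℝ, 0 < t → z ^ 2 / (4 * t) = c / t := by
    intro t ht; rw [hc_def]; ring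
  have hbound1 : ∀ t : ℝ, 0 < t → φ t ≤ K₁ * c ^ (-p) := by
    intro t ht
    have hub : Real.exp (-(c / t)) * (c / t) ^ p ≤ K₁ := exp_rpow_bound hp (by positivity)
    have hexp : Real.exp (-(t + z ^ 2 / (4 * t))) ≤ Real.exp (-(c / t)) := by
      rw [hct t ht]
      apply Real.exp_le_exp.2
      linarith
    have h1 : φ t ≤ Real.exp (-(c / t)) * t ^ (-ν - 1) :=
      mul_le_mul_of_nonneg_right hexp (Real.rpow_nonneg ht.le _)
    have h2 : Real.exp (-(c / t)) ≤ K₁ * (c / t) ^ (-p) := by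
      have hcp : (0:ℝ) < (c / t) ^ p := Real.rpow_pos_of_pos (by positivity) _
      rw [Real.rpow_neg (by positivity), ← div_eq_mul_inv, le_div_iff₀ hcp]
      linarith [hub]
    calc φ t ≤ K₁ * (c / t) ^ (-p) * t ^ (-ν - 1) := by
          refine h1.trans (mul_le_mul_of_nonneg_right h2 (Real.rpow_nonneg ht.le _))
      _ = K₁ * (c ^ (-p) * (t ^ p * t ^ (-p))) := by
          rw [Real.div_rpow hc.le ht.le, Real.rpow_neg ht.le p,
            show (-ν - 1 : ℝ) = -p by rw [hp_def]; ring, Real.rpow_neg ht.le p]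
          field_simp
      _ = K₁ * c ^ (-p) := by rw [← Real.rpow_add ht]; simp
  have hbound2 : ∀ t : ℝ, c < t → φ t ≤ t ^ (-p) := by
    intro t ht
    have ht0 : 0 < t := hc.trans ht
    have : Real.exp (-(t + z ^ 2 / (4 * t))) ≤ 1 := by
      rw [Real.exp_le_one_iff]
      rw [hct t ht0]
      have : 0 < c / t := by positivity
      linarith
    have h := mul_le_mul_of_nonneg_right this (Real.rpow_nonneg ht0.le (-ν - 1))
    rw [one_mul] at h
    refine h.trans (le_of_eq ?_)
    congr 1
    rw [hp_def]; ring
  have hint1 : IntegrableOn φ (Ioc 0 c) := by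
    refine Integrable.mono' (g := fun _ => K₁ * c ^ (-p))
      (integrableOn_const measure_Ioc_lt_top.ne)
      (hφ_meas.aestronglyMeasurable) ?_
    rw [ae_restrict_iff' measurableSet_Ioc]
    filter_upwards with t ht
    rw [Real.norm_eq_abs, abs_of_nonneg (hφ_nonneg t ht.1)]
    exact hbound1 t ht.1
  have hint2 : IntegrableOn φ (Ioi c) := by
    refine Integrable.mono' (integrableOn_Ioi_rpow_of_lt (a := -p) (by linarith) hc)
      (hφ_meas.aestronglyMeasurable) ?_
    rw [ae_restrict_iff' measurableSet_Ioi]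
    filter_upwards with t ht
    rw [Real.norm_eq_abs, abs_of_nonneg (hφ_nonneg t (lt_trans hc ht))]
    exact hbound2 t ht
  have hsplit : Ioc (0:ℝ) c ∪ Ioi c = Ioi 0 := Ioc_union_Ioi_eq_Ioi hc.le
  have hIone : ∫ t in Ioc (0:ℝ) c, φ t ≤ K₁ * c ^ (-p) * c := by
    have := setIntegral_mono_on hint1 (integrableOn_const measure_Ioc_lt_top.ne)
      measurableSet_Ioc (fun t ht => hbound1 t ht.1)
    refine this.trans (le_of_eq ?_)
    rw [setIntegral_const]
    rw [measureReal_def, Real.volume_Ioc, smul_eq_mul, ENNReal.toReal_ofReal (by linarith)]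
    ring
  have hItwo : ∫ t in Ioi c, φ t ≤ c ^ (-p + 1) / ν := by
    have hmono := setIntegral_mono_on hint2 (integrableOn_Ioi_rpow_of_lt (a := -p) (by linarith) hc)
      measurableSet_Ioi (fun t ht => hbound2 t ht)
    rw [integral_Ioi_rpow_of_lt (by linarith) hc] at hmono
    refine hmono.trans (le_of_eq ?_)
    have hνne : ν ≠ 0 := hν.ne'
    rw [show (-p + 1 : ℝ) = -ν by rw [hp_def]; ring]
    field_simp
  have hIsum : ∫ t in Ioi (0:ℝ), φ t ≤ (K₁ + 1 / ν) * c ^ (-ν) := by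
    rw [← hsplit, setIntegral_union (Ioc_disjoint_Ioi le_rfl) measurableSet_Ioi hint1 hint2]
    have e1 : K₁ * c ^ (-p) * c = K₁ * c ^ (-ν) := by
      rw [mul_assoc]
      congr 1
      nth_rewrite 2 [← Real.rpow_one c]
      rw [← Real.rpow_add hc, show (-p + 1 : ℝ) = -ν by rw [hp_def]; ring]
    have e2 : c ^ (-p + 1) / ν = (1 / ν) * c ^ (-ν) := by
      rw [hp_def]
      rw [show -(ν + 1) + 1 = -ν by ring]
      ring
    rw [e1] at hIone
    rw [e2] at hItwo
    linarith
  have hmain : besselK ν z ≤ 2 ^ (-ν - 1) * z ^ ν * ((K₁ + 1 / ν) * c ^ (-ν)) := by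
    rw [besselK]
    apply mul_le_mul_of_nonneg_left hIsum
    positivity
  refine hmain.trans (le_of_eq ?_)
  have hz2 : ((z ^ 2 : ℝ)) ^ (-ν) = z ^ (-(2 * ν)) := by
    rw [← Real.rpow_natCast z 2, ← Real.rpow_mul hz.le]
    norm_num
  have hcν : c ^ (-ν) = (z ^ 2) ^ (-ν) * 4 ^ ν := by
    rw [hc_def, Real.div_rpow (by positivity) (by norm_num),
      Real.rpow_neg (by norm_num : (0:ℝ) ≤ 4)]
    field_simp
  have hzz : z ^ ν * z ^ (-(2 * ν)) = z ^ (-ν) := by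
    rw [← Real.rpow_add hz]
    congr 1
    ring
  rw [hcν, hz2]
  calc 2 ^ (-ν - 1) * z ^ ν * ((K₁ + 1 / ν) * (z ^ (-(2 * ν)) * 4 ^ ν))
      = 2 ^ (-ν - 1) * ((K₁ + 1 / ν) * 4 ^ ν) * (z ^ ν * z ^ (-(2 * ν))) := by ring
    _ = 2 ^ (-ν - 1) * ((K₁ + 1 / ν) * 4 ^ ν) * z ^ (-ν) := by rw [hzz]

lemma integrableOn_norm_rpow_ball {N : ℕ} (hN : 1 ≤ N) {r : ℝ} (hr : -(N:ℝ) < r) :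
    IntegrableOn (fun y : EuclideanSpace ℝ (Fin N) => ‖y‖ ^ r)
      (Metric.ball (0 : EuclideanSpace ℝ (Fin N)) 1) := by
  classical
  set E := EuclideanSpace ℝ (Fin N)
  have hfinrank : Module.finrank ℝ E = N := finrank_euclideanSpace_fin
  haveI : Nontrivial E := Module.nontrivial_of_finrank_pos (R := ℝ)
    (by omega : 0 < Module.finrank ℝ E)
  constructor
  · exact ((measurable_norm.pow measurable_const).aestronglyMeasurable).restrict
  · set R : ℕ → ℝ := fun n => (1/2 : ℝ) ^ n with hR
    have hRpos : ∀ n, 0 < R n := fun n => by positivity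
    set A : ℕ → Set E := fun n => Metric.ball 0 (R n) \ Metric.ball 0 (R (n+1)) with hA
    have hcover : Metric.ball (0:E) 1 ⊆ {0} ∪ ⋃ n, A n := by
      intro y hy
      rcases eq_or_ne y 0 with h | h
      · exact Or.inl (by simp [h])
      · refine Or.inr ?_
        have hy0 : 0 < ‖y‖ := norm_pos_iff.2 h
        have hy1 : ‖y‖ < 1 := by simpa [Metric.mem_ball, dist_zero_right] using hy
        have hex : ∃ n, R (n+1) ≤ ‖y‖ := by
          obtain ⟨n, hn⟩ := exists_pow_lt_of_lt_one hy0 (by norm_num : (1/2:ℝ) < 1)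
          refine ⟨n, le_of_lt (lt_of_le_of_lt ?_ hn)⟩
          exact pow_le_pow_of_le_one (by norm_num) (by norm_num) (Nat.le_succ n)
        set n := Nat.find hex with hn_def
        have h1 : R (n+1) ≤ ‖y‖ := Nat.find_spec hex
        have h2 : ‖y‖ < R n := by
          rcases Nat.eq_zero_or_pos n with h0 | h0
          · rw [h0]; simpa [hR] using hy1
          · have := Nat.find_min hex (m := n - 1) (by omega)
            push_neg at this
            have : ‖y‖ < R (n - 1 + 1) := this
            simpa [Nat.sub_add_cancel h0] using this
        exact mem_iUnion.2 ⟨n, by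
          simp [hA, Metric.mem_ball, dist_zero_right, h2, not_lt.2 h1]⟩
    have hAmeas : ∀ n, MeasurableSet (A n) :=
      fun n => measurableSet_ball.diff measurableSet_ball
    set g : E → ℝ≥0∞ := fun y => (‖(‖y‖ ^ r : ℝ)‖₊ : ℝ≥0∞) with hg
    set D : ℝ := max 1 ((1/2 : ℝ) ^ r) with hD
    have hD0 : 0 ≤ D := le_trans zero_le_one (le_max_left _ _)
    have hshell : ∀ n, ∀ y ∈ A n, g y ≤ ENNReal.ofReal (D * (R n) ^ r) := by
      intro n y hy
      obtain ⟨hy1, hy2⟩ := hy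
      rw [Metric.mem_ball, dist_zero_right] at hy1
      rw [Metric.mem_ball, dist_zero_right, not_lt] at hy2
      have hy0 : 0 < ‖y‖ := lt_of_lt_of_le (hRpos (n+1)) hy2
      have key : ‖y‖ ^ r ≤ D * (R n) ^ r := by
        rcases le_or_gt 0 r with hr0 | hr0
        · calc ‖y‖ ^ r ≤ (R n) ^ r := Real.rpow_le_rpow hy0.le hy1.le hr0
            _ ≤ D * (R n) ^ r := le_mul_of_one_le_left (Real.rpow_nonneg (hRpos n).le r)
                (le_max_left _ _)
        · calc ‖y‖ ^ r ≤ (R (n+1)) ^ r :=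
                Real.rpow_le_rpow_of_nonpos (hRpos (n+1)) hy2 hr0.le
            _ = (1/2 : ℝ) ^ r * (R n) ^ r := by
                simp only [hR, pow_succ]
                rw [Real.mul_rpow (by positivity) (by norm_num)]
                ring
            _ ≤ D * (R n) ^ r := mul_le_mul_of_nonneg_right (le_max_right _ _)
                (Real.rpow_nonneg (by positivity) r)
      have : g y = ENNReal.ofReal (‖y‖ ^ r) := by
        rw [hg]
        exact Real.enorm_eq_ofReal (Real.rpow_nonneg (norm_nonneg y) r)
      rw [this]
      exact ENNReal.ofReal_le_ofReal key
    have hvol : ∀ n, volume (A n) ≤ ENNReal.ofReal ((R n) ^ (N:ℝ)) *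
        volume (Metric.ball (0:E) 1) := by
      intro n
      calc volume (A n) ≤ volume (Metric.ball (0:E) (R n)) := measure_mono diff_subset
        _ = ENNReal.ofReal ((R n) ^ (N:ℝ)) * volume (Metric.ball (0:E) 1) := by
            rw [Measure.addHaar_ball (μ := volume) 0 (hRpos n).le, hfinrank,
              ← Real.rpow_natCast (R n) N]
    have hterm : ∀ n, ∫⁻ y in A n, g y ≤
        (ENNReal.ofReal D * volume (Metric.ball (0:E) 1)) *
          ENNReal.ofReal ((R n) ^ (r + N)) := by
      intro n
      calc ∫⁻ y in A n, g y
          ≤ ∫⁻ _ in A n, ENNReal.ofReal (D * (R n) ^ r) :=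
            setLIntegral_mono measurable_const (fun y hy => hshell n y hy)
        _ = ENNReal.ofReal (D * (R n) ^ r) * volume (A n) := by
            rw [setLIntegral_const]
        _ ≤ ENNReal.ofReal (D * (R n) ^ r) *
            (ENNReal.ofReal ((R n) ^ (N:ℝ)) * volume (Metric.ball (0:E) 1)) :=
            mul_le_mul_right (hvol n) _
        _ = (ENNReal.ofReal D * volume (Metric.ball (0:E) 1)) *
            ENNReal.ofReal ((R n) ^ (r + N)) := by
            rw [ENNReal.ofReal_mul hD0, Real.rpow_add (hRpos n),
              ENNReal.ofReal_mul (Real.rpow_nonneg (hRpos n).le r)]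
            ring
    have hsum : ∑' n, ENNReal.ofReal ((R n) ^ (r + (N:ℝ))) < ⊤ := by
      have hx : ∀ n, ENNReal.ofReal ((R n) ^ (r + (N:ℝ))) =
          (ENNReal.ofReal ((1/2 : ℝ) ^ (r + (N:ℝ)))) ^ n := by
        intro n
        simp only [hR]
        rw [← Real.rpow_natCast ((1/2:ℝ)) n, ← Real.rpow_mul (by norm_num),
          mul_comm (n:ℝ), Real.rpow_mul (by norm_num), Real.rpow_natCast,
          ← ENNReal.ofReal_pow (Real.rpow_nonneg (by norm_num) _)]
      simp_rw [hx]
      rw [ENNReal.tsum_geometric]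
      have hlt : (1/2 : ℝ) ^ (r + (N:ℝ)) < 1 := by
        apply Real.rpow_lt_one (by norm_num) (by norm_num)
        linarith
      rw [ENNReal.inv_lt_top]
      rw [tsub_pos_iff_lt]
      exact ENNReal.ofReal_lt_one.2 hlt
    show (∫⁻ y in Metric.ball (0:E) 1, g y) < ⊤
    calc ∫⁻ y in Metric.ball (0:E) 1, g y
        ≤ ∫⁻ y in {(0:E)} ∪ ⋃ n, A n, g y := lintegral_mono_set hcover
      _ ≤ (∫⁻ y in {(0:E)}, g y) + ∫⁻ y in ⋃ n, A n, g y := lintegral_union_le _ _ _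
      _ ≤ 0 + ∑' n, ∫⁻ y in A n, g y := by
          gcongr
          · rw [setLIntegral_measure_zero _ _ (measure_singleton 0)]
          · exact lintegral_iUnion_le _ _
      _ ≤ ∑' n, (ENNReal.ofReal D * volume (Metric.ball (0:E) 1)) *
            ENNReal.ofReal ((R n) ^ (r + N)) := by
          rw [zero_add]; exact ENNReal.tsum_le_tsum hterm
      _ = (ENNReal.ofReal D * volume (Metric.ball (0:E) 1)) *
            ∑' n, ENNReal.ofReal ((R n) ^ (r + N)) := ENNReal.tsum_mul_left
      _ < ⊤ := ENNReal.mul_lt_top (ENNReal.mul_lt_top ENNReal.ofReal_lt_top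
            measure_ball_lt_top) hsum

lemma integrableOn_dist_rpow_ball {N : ℕ} (hN : 1 ≤ N)
    (x : EuclideanSpace ℝ (Fin N)) {r : ℝ} (hr : -(N:ℝ) < r) :
    IntegrableOn (fun y : EuclideanSpace ℝ (Fin N) => dist x y ^ r)
      (Metric.ball x 1) := by
  have h0 := integrableOn_norm_rpow_ball hN hr
  rw [← integrable_indicator_iff measurableSet_ball] at h0 ⊢
  have h1 := h0.comp_sub_right x
  have heq : (fun t : EuclideanSpace ℝ (Fin N) =>
      (Metric.ball (0 : EuclideanSpace ℝ (Fin N)) 1).indicator (fun y => ‖y‖ ^ r) (t - x)) =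
      (Metric.ball x 1).indicator (fun y => dist x y ^ r) := by
    funext y
    by_cases hy : y ∈ Metric.ball x 1
    · have hy' : y - x ∈ Metric.ball (0 : EuclideanSpace ℝ (Fin N)) 1 := by
        rw [Metric.mem_ball, dist_zero_right]
        rw [Metric.mem_ball, dist_eq_norm] at hy
        exact hy
      rw [Set.indicator_of_mem hy', Set.indicator_of_mem hy, dist_comm, dist_eq_norm]
    · have hy' : y - x ∉ Metric.ball (0 : EuclideanSpace ℝ (Fin N)) 1 := by
        intro hc
        apply hy
        rw [Metric.mem_ball, dist_zero_right] at hc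
        rw [Metric.mem_ball, dist_eq_norm]
        exact hc
      rw [Set.indicator_of_notMem hy', Set.indicator_of_notMem hy]
  rwa [heq] at h1

lemma integrable_one_add_dist {N : ℕ} (x : EuclideanSpace ℝ (Fin N)) {r : ℝ}
    (hr : (N:ℝ) < r) :
    Integrable (fun y : EuclideanSpace ℝ (Fin N) => (1 + dist x y) ^ (-r)) := by
  have h0 : Integrable (fun y : EuclideanSpace ℝ (Fin N) => (1 + ‖y‖) ^ (-r)) :=
    integrable_one_add_norm (by rwa [finrank_euclideanSpace_fin])
  have h1 := h0.comp_sub_right x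
  refine h1.congr (Eventually.of_forall fun y => ?_)
  simp only []
  rw [dist_comm x y, dist_eq_norm]

theorem carre_du_champ_nonpositive (N : ℕ) (hN : 1 ≤ N) (s m : ℝ)
    (hs : s ∈ Set.Ioo (0 : ℝ) 1) (hm : 0 < m)
    (f : EuclideanSpace ℝ (Fin N) → ℝ) (hf : ContDiff ℝ 2 f)
    (hfb : ∀ i : ℕ, i ≤ 2 → ∃ C : ℝ, ∀ x, ‖iteratedFDeriv ℝ i f x‖ ≤ C)
    (Lf Lf2 : EuclideanSpace ℝ (Fin N) → ℝ)
    (hLf : ∀ x, fracRelPVAt N s m f x (Lf x))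
    (hLf2 : ∀ x, fracRelPVAt N s m (fun y => (f y) ^ 2) x (Lf2 x)) :
    ∀ x : EuclideanSpace ℝ (Fin N),
      (Lf2 x - 2 * f x * Lf x =
        -(CNs N s) * m ^ (((N : ℝ) + 2 * s) / 2) *
          (∫ y : EuclideanSpace ℝ (Fin N),
            (f x - f y) ^ 2 * dist x y ^ (-(((N : ℝ) + 2 * s) / 2)) *
              besselK (((N : ℝ) + 2 * s) / 2) (m * dist x y))
          - m ^ (2 * s) * (f x) ^ 2)
      ∧ Lf2 x - 2 * f x * Lf x ≤ 0
      ∧ Lf2 x ≤ 2 * f x * Lf x := by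
  obtain ⟨hs0, hs1⟩ := hs
  intro x
  classical
  have hN' : (1:ℝ) ≤ (N:ℝ) := by exact_mod_cast hN
  set ν : ℝ := ((N : ℝ) + 2 * s) / 2 with hν_def
  have hν : 0 < ν := by rw [hν_def]; linarith
  obtain ⟨C, hC, hCb⟩ := besselK_le_rpow hν
  -- bounds on f
  obtain ⟨C₀, hC₀⟩ := hfb 0 (by norm_num)
  have hfC₀ : ∀ y, |f y| ≤ C₀ := by
    intro y
    have := hC₀ y
    rwa [norm_iteratedFDeriv_zero, Real.norm_eq_abs] at this
  have hC₀0 : 0 ≤ C₀ := (abs_nonneg _).trans (hfC₀ x)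
  obtain ⟨C₁, hC₁⟩ := hfb 1 (by norm_num)
  have hC₁0 : 0 ≤ C₁ := (norm_nonneg _).trans (hC₁ x)
  have hlip : ∀ y, |f x - f y| ≤ C₁ * dist x y := by
    intro y
    have hdiff : ∀ z ∈ (univ : Set (EuclideanSpace ℝ (Fin N))), DifferentiableAt ℝ f z :=
      fun z _ => (hf.differentiable (by norm_num)).differentiableAt
    have hbd : ∀ z ∈ (univ : Set (EuclideanSpace ℝ (Fin N))), ‖fderiv ℝ f z‖ ≤ C₁ := by
      intro z _
      have : ‖fderiv ℝ f z‖ = ‖iteratedFDeriv ℝ 1 f z‖ := by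
        rw [← norm_iteratedFDeriv_fderiv, norm_iteratedFDeriv_zero]
      rw [this]
      exact hC₁ z
    have := convex_univ.norm_image_sub_le_of_norm_fderiv_le hdiff hbd (mem_univ y) (mem_univ x)
    rwa [Real.norm_eq_abs, ← dist_eq_norm] at this
  -- the kernel
  set k : EuclideanSpace ℝ (Fin N) → ℝ :=
    fun y => dist x y ^ (-ν) * besselK ν (m * dist x y) with hk_def
  have hdist_meas : Measurable fun y : EuclideanSpace ℝ (Fin N) => dist x y :=
    (continuous_const.dist continuous_id).measurable
  have hk_meas : Measurable k :=
    (hdist_meas.pow measurable_const).mul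
      ((besselK_measurable ν).comp (measurable_const.mul hdist_meas))
  have hbes_nonneg : ∀ y : EuclideanSpace ℝ (Fin N), 0 ≤ besselK ν (m * dist x y) :=
    fun y => besselK_nonneg ν (mul_nonneg hm.le dist_nonneg)
  have hk_nonneg : ∀ y, 0 ≤ k y := fun y =>
    mul_nonneg (Real.rpow_nonneg dist_nonneg _) (hbes_nonneg y)
  set r : ℝ := (N:ℝ) + 2 * s with hr_def
  have hr_big : (N:ℝ) < r := by rw [hr_def]; linarith
  set M : ℝ := C * m ^ (-ν) with hM_def
  have hM : 0 < M := mul_pos hC (Real.rpow_pos_of_pos hm _)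
  have hk_bound : ∀ y, 0 < dist x y → k y ≤ M * dist x y ^ (-r) := by
    intro y hd
    have h1 : besselK ν (m * dist x y) ≤ C * (m * dist x y) ^ (-ν) :=
      hCb _ (mul_pos hm hd)
    have h2 : (m * dist x y) ^ (-ν) = m ^ (-ν) * dist x y ^ (-ν) :=
      Real.mul_rpow hm.le dist_nonneg
    calc k y ≤ dist x y ^ (-ν) * (C * (m ^ (-ν) * dist x y ^ (-ν))) := by
          rw [hk_def]
          dsimp only
          apply mul_le_mul_of_nonneg_left _ (Real.rpow_nonneg dist_nonneg _)
          rw [← h2]; exact h1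
      _ = M * (dist x y ^ (-ν) * dist x y ^ (-ν)) := by rw [hM_def]; ring
      _ = M * dist x y ^ (-r) := by
          rw [← Real.rpow_add hd]
          congr 1
          rw [hν_def, hr_def]; ring
  -- truncation sets
  set S : ℝ → Set (EuclideanSpace ℝ (Fin N)) := fun ε => {y | ε < dist x y} with hS_def
  have hS_meas : ∀ ε, MeasurableSet (S ε) := fun ε =>
    (isOpen_lt continuous_const (continuous_const.dist continuous_id)).measurableSet
  -- integrability of the kernel away from x
  have hkint : ∀ ε : ℝ, 0 < ε → IntegrableOn k (S ε) := by
    intro ε hε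
    have hint : Integrable (fun y : EuclideanSpace ℝ (Fin N) => (1 + dist x y) ^ (-r)) :=
      integrable_one_add_dist x hr_big
    refine Integrable.mono' (g := fun y => (M * ((1+ε)/ε) ^ r) * (1 + dist x y) ^ (-r))
      ((hint.const_mul _).integrableOn) hk_meas.aestronglyMeasurable.restrict ?_
    rw [ae_restrict_iff' (hS_meas ε)]
    filter_upwards with y hy
    have hd : ε < dist x y := hy
    have hd0 : 0 < dist x y := hε.trans hd
    rw [Real.norm_eq_abs, abs_of_nonneg (hk_nonneg y)]
    have key : dist x y ^ (-r) ≤ ((1+ε)/ε) ^ r * (1 + dist x y) ^ (-r) := by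
      have h1 : 1 + dist x y ≤ (1+ε)/ε * dist x y := by
        rw [div_mul_eq_mul_div, le_div_iff₀ hε]
        nlinarith
      have h2 : ((1+ε)/ε * dist x y) ^ (-r) ≤ (1 + dist x y) ^ (-r) :=
        Real.rpow_le_rpow_of_nonpos (by positivity) h1 (by rw [hr_def]; linarith)
      have h3 : ((1+ε)/ε * dist x y) ^ (-r) = ((1+ε)/ε) ^ (-r) * dist x y ^ (-r) :=
        Real.mul_rpow (by positivity) dist_nonneg
      have h4 : ((1+ε)/ε) ^ r * ((1+ε)/ε) ^ (-r) = 1 := by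
        rw [← Real.rpow_add (by positivity)]; simp
      calc dist x y ^ (-r) = ((1+ε)/ε) ^ r * (((1+ε)/ε * dist x y) ^ (-r)) := by
            rw [h3, ← mul_assoc, h4, one_mul]
        _ ≤ ((1+ε)/ε) ^ r * (1 + dist x y) ^ (-r) :=
            mul_le_mul_of_nonneg_left h2 (Real.rpow_nonneg (by positivity) _)
    calc k y ≤ M * dist x y ^ (-r) := hk_bound y hd0
      _ ≤ M * (((1+ε)/ε) ^ r * (1 + dist x y) ^ (-r)) :=
          mul_le_mul_of_nonneg_left key hM.le
      _ = (M * ((1+ε)/ε) ^ r) * (1 + dist x y) ^ (-r) := by ring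
  -- the three integrands
  set G₁ : EuclideanSpace ℝ (Fin N) → ℝ := fun y =>
    (f x - f y) * dist x y ^ (-ν) * besselK ν (m * dist x y) with hG₁_def
  set G₂ : EuclideanSpace ℝ (Fin N) → ℝ := fun y =>
    (f x ^ 2 - f y ^ 2) * dist x y ^ (-ν) * besselK ν (m * dist x y) with hG₂_def
  set q : EuclideanSpace ℝ (Fin N) → ℝ := fun y =>
    (f x - f y) ^ 2 * dist x y ^ (-ν) * besselK ν (m * dist x y) with hq_def
  have hq_nonneg : ∀ y, 0 ≤ q y := by
    intro y
    rw [hq_def]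
    exact mul_nonneg (mul_nonneg (sq_nonneg _) (Real.rpow_nonneg dist_nonneg _)) (hbes_nonneg y)
  have hfmeas : Measurable f := hf.continuous.measurable
  have hq_meas : Measurable q := by
    rw [hq_def]
    exact (((measurable_const.sub hfmeas).pow measurable_const).mul
      (hdist_meas.pow measurable_const)).mul
      ((besselK_measurable ν).comp (measurable_const.mul hdist_meas))
  have hG₁_meas : Measurable G₁ := by
    rw [hG₁_def]
    exact ((measurable_const.sub hfmeas).mul (hdist_meas.pow measurable_const)).mul
      ((besselK_measurable ν).comp (measurable_const.mul hdist_meas))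
  have hG₂_meas : Measurable G₂ := by
    rw [hG₂_def]
    exact ((measurable_const.sub (hfmeas.pow measurable_const)).mul
      (hdist_meas.pow measurable_const)).mul
      ((besselK_measurable ν).comp (measurable_const.mul hdist_meas))
  have habs_k : ∀ y, |dist x y ^ (-ν) * besselK ν (m * dist x y)| = k y := by
    intro y
    rw [hk_def]
    exact abs_of_nonneg (hk_nonneg y)
  have hG₁_int : ∀ ε : ℝ, 0 < ε → IntegrableOn G₁ (S ε) := by
    intro ε hε
    refine Integrable.mono' (((hkint ε hε).const_mul (2 * C₀)))
      hG₁_meas.aestronglyMeasurable.restrict ?_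
    filter_upwards with y
    rw [Real.norm_eq_abs, hG₁_def]
    dsimp only
    rw [mul_assoc, abs_mul, habs_k y]
    apply mul_le_mul_of_nonneg_right _ (hk_nonneg y)
    calc |f x - f y| ≤ |f x| + |f y| := abs_sub _ _
      _ ≤ 2 * C₀ := by linarith [hfC₀ x, hfC₀ y]
  have hG₂_int : ∀ ε : ℝ, 0 < ε → IntegrableOn G₂ (S ε) := by
    intro ε hε
    refine Integrable.mono' (((hkint ε hε).const_mul (2 * C₀ ^ 2)))
      hG₂_meas.aestronglyMeasurable.restrict ?_
    filter_upwards with y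
    rw [Real.norm_eq_abs, hG₂_def]
    dsimp only
    rw [mul_assoc, abs_mul, habs_k y]
    apply mul_le_mul_of_nonneg_right _ (hk_nonneg y)
    have h1 : |f x ^ 2 - f y ^ 2| ≤ |f x| ^ 2 + |f y| ^ 2 := by
      rw [← abs_pow, ← abs_pow]
      exact abs_sub _ _
    have h2 : |f x| ^ 2 ≤ C₀ ^ 2 := by
      apply pow_le_pow_left₀ (abs_nonneg _) (hfC₀ x)
    have h3 : |f y| ^ 2 ≤ C₀ ^ 2 := by
      apply pow_le_pow_left₀ (abs_nonneg _) (hfC₀ y)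
    linarith
  -- q is integrable on all of space
  have hq_int : Integrable q := by
    have hball : IntegrableOn q (Metric.ball x 1) := by
      have hdom := (integrableOn_dist_rpow_ball hN x (r := 2 - r)
        (by rw [hr_def]; push_cast; linarith)).const_mul (C₁ ^ 2 * M)
      refine Integrable.mono' hdom hq_meas.aestronglyMeasurable.restrict ?_
      filter_upwards with y
      rw [Real.norm_eq_abs, abs_of_nonneg (hq_nonneg y)]
      rcases eq_or_lt_of_le (dist_nonneg (x := x) (y := y)) with hd | hd
      · have hxy : x = y := by rwa [eq_comm, dist_eq_zero] at hd
        have hq0 : q y = 0 := by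
          rw [hq_def]
          dsimp only
          rw [← hxy, sub_self]
          ring
        rw [hq0]
        positivity
      · have h1 : (f x - f y) ^ 2 ≤ (C₁ * dist x y) ^ 2 := by
          rw [← sq_abs (f x - f y)]
          apply pow_le_pow_left₀ (abs_nonneg _) (hlip y)
        calc q y = (f x - f y) ^ 2 * k y := by rw [hq_def, hk_def]; dsimp only; ring
          _ ≤ (C₁ * dist x y) ^ 2 * (M * dist x y ^ (-r)) := by
              apply mul_le_mul h1 (hk_bound y hd) (hk_nonneg y) (by positivity)
          _ = (C₁ ^ 2 * M) * (dist x y ^ (2:ℕ) * dist x y ^ (-r)) := by ring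
          _ = (C₁ ^ 2 * M) * dist x y ^ (2 - r) := by
              rw [← Real.rpow_natCast (dist x y) 2, ← Real.rpow_add hd,
                show ((2:ℕ):ℝ) + -r = 2 - r by push_cast; ring]
    have houter : IntegrableOn q (S (1/2)) := by
      refine Integrable.mono' (((hkint (1/2) (by norm_num)).const_mul ((2 * C₀) ^ 2)))
        hq_meas.aestronglyMeasurable.restrict ?_
      filter_upwards with y
      rw [Real.norm_eq_abs, abs_of_nonneg (hq_nonneg y), hq_def]
      dsimp only
      rw [mul_assoc]
      have : dist x y ^ (-ν) * besselK ν (m * dist x y) = k y := by rw [hk_def]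
      rw [this]
      apply mul_le_mul_of_nonneg_right _ (hk_nonneg y)
      rw [← sq_abs (f x - f y)]
      apply pow_le_pow_left₀ (abs_nonneg _)
      calc |f x - f y| ≤ |f x| + |f y| := abs_sub _ _
        _ ≤ 2 * C₀ := by linarith [hfC₀ x, hfC₀ y]
    have hcov : (univ : Set (EuclideanSpace ℝ (Fin N))) ⊆ Metric.ball x 1 ∪ S (1/2) := by
      intro y _
      rcases lt_or_ge (dist x y) 1 with h | h
      · left
        rw [Metric.mem_ball, dist_comm]
        exact h
      · right
        show (1:ℝ)/2 < dist x y
        linarith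
    have : IntegrableOn q univ := (hball.union houter).mono_set hcov
    rwa [integrableOn_univ] at this
  -- the total integral and the key limit
  set T : ℝ := ∫ y, q y with hT_def
  have hT_nonneg : 0 ≤ T := integral_nonneg hq_nonneg
  have hAle : ∀ ε : ℝ, (∫ y in S ε, q y) ≤ T := fun ε =>
    setIntegral_le_integral hq_int (Eventually.of_forall hq_nonneg)
  haveI : Nontrivial (EuclideanSpace ℝ (Fin N)) := Module.nontrivial_of_finrank_pos (R := ℝ)
    (by rw [finrank_euclideanSpace_fin]; omega)
  have hsingleton : volume ({x} : Set (EuclideanSpace ℝ (Fin N))) = 0 := measure_singleton x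
  have hseq : Tendsto (fun n : ℕ => ∫ y in S (1/(n+1)), q y) atTop (𝓝 T) := by
    have hmono : Monotone (fun n : ℕ => S (1/(n+1):ℝ)) := by
      intro a b hab y hy
      have hle : (1:ℝ)/(b+1) ≤ 1/(a+1) := by
        apply one_div_le_one_div_of_le (by positivity)
        have : (a:ℝ) ≤ b := Nat.cast_le.2 hab
        linarith
      exact lt_of_le_of_lt hle hy
    have hU : ⋃ n : ℕ, S (1/(n+1):ℝ) = ({x}ᶜ : Set (EuclideanSpace ℝ (Fin N))) := by
      ext y
      simp only [mem_iUnion, hS_def, mem_setOf_eq, mem_compl_iff, mem_singleton_iff]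
      constructor
      · rintro ⟨n, hn⟩ h
        rw [h, dist_self] at hn
        have : (0:ℝ) < 1/(n+1) := by positivity
        linarith
      · intro h
        have hd : 0 < dist x y := dist_pos.2 (fun hxy => h hxy.symm)
        obtain ⟨n, hn⟩ := exists_nat_one_div_lt hd
        exact ⟨n, hn⟩
    have hlim := tendsto_setIntegral_of_monotone (fun n : ℕ => hS_meas _) hmono
      hq_int.integrableOn
    rw [hU] at hlim
    have hcompl : (∫ y in ({x}ᶜ : Set (EuclideanSpace ℝ (Fin N))), q y) = T := by
      have := integral_add_compl (measurableSet_singleton x) hq_int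
      have hz : (∫ y in ({x} : Set (EuclideanSpace ℝ (Fin N))), q y) = 0 := by
        rw [Measure.restrict_eq_zero.2 hsingleton, integral_zero_measure]
      rw [hT_def, ← this, hz, zero_add]
    rwa [hcompl] at hlim
  have hkey : Tendsto (fun ε : ℝ => ∫ y in S ε, q y) (nhdsWithin 0 (Set.Ioi 0)) (𝓝 T) := by
    rw [Metric.tendsto_nhdsWithin_nhds]
    intro δ hδ
    obtain ⟨n₀, hn₀⟩ := (Metric.tendsto_atTop.1 hseq) δ hδ
    have hA0 : dist (∫ y in S (1/(n₀+1):ℝ), q y) T < δ := hn₀ n₀ le_rfl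
    refine ⟨1/(n₀+1), by positivity, ?_⟩
    intro ε hε hεd
    have hε0 : (0:ℝ) < ε := hε
    rw [Real.dist_eq, sub_zero, abs_of_pos hε0] at hεd
    have hsub : S (1/(n₀+1):ℝ) ⊆ S ε := by
      intro y hy
      exact lt_trans hεd hy
    have hmono2 : (∫ y in S (1/(n₀+1):ℝ), q y) ≤ ∫ y in S ε, q y :=
      setIntegral_mono_set hq_int.integrableOn (Eventually.of_forall hq_nonneg)
        (HasSubset.Subset.eventuallyLE hsub)
    rw [Real.dist_eq] at hA0 ⊢
    rw [abs_sub_lt_iff] at hA0 ⊢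
    constructor
    · linarith [hAle ε]
    · linarith [hAle ε, hAle (1/(n₀+1):ℝ), hA0.2]
  -- combine with the hypotheses
  have h1 : Tendsto (fun ε : ℝ => CNs N s * m ^ ν * ∫ y in S ε, G₁ y)
      (nhdsWithin 0 (Set.Ioi 0)) (𝓝 (Lf x - m ^ (2 * s) * f x)) := hLf x
  have h2 : Tendsto (fun ε : ℝ => CNs N s * m ^ ν * ∫ y in S ε, G₂ y)
      (nhdsWithin 0 (Set.Ioi 0)) (𝓝 (Lf2 x - m ^ (2 * s) * f x ^ 2)) := hLf2 x
  have hprod : Tendsto (fun ε : ℝ => CNs N s * m ^ ν * (∫ y in S ε, G₂ y)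
      - 2 * f x * (CNs N s * m ^ ν * ∫ y in S ε, G₁ y)) (nhdsWithin 0 (Set.Ioi 0))
      (𝓝 ((Lf2 x - m ^ (2 * s) * f x ^ 2) - 2 * f x * (Lf x - m ^ (2 * s) * f x))) :=
    h2.sub (h1.const_mul (2 * f x))
  have heqev : ∀ᶠ ε in nhdsWithin (0:ℝ) (Set.Ioi 0),
      CNs N s * m ^ ν * (∫ y in S ε, G₂ y)
        - 2 * f x * (CNs N s * m ^ ν * ∫ y in S ε, G₁ y)
      = -(CNs N s * m ^ ν) * ∫ y in S ε, q y := by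
    filter_upwards [self_mem_nhdsWithin] with ε hε
    have hε0 : (0:ℝ) < ε := hε
    have e1 : (∫ y in S ε, G₂ y) - 2 * f x * (∫ y in S ε, G₁ y) = - ∫ y in S ε, q y := by
      rw [← integral_const_mul (2 * f x) G₁, ← integral_sub (hG₂_int ε hε0)
        ((hG₁_int ε hε0).const_mul (2 * f x)), ← integral_neg]
      apply integral_congr_ae
      filter_upwards with y
      rw [hG₂_def, hG₁_def, hq_def]
      dsimp only
      ring
    calc CNs N s * m ^ ν * (∫ y in S ε, G₂ y)
          - 2 * f x * (CNs N s * m ^ ν * ∫ y in S ε, G₁ y)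
        = CNs N s * m ^ ν * ((∫ y in S ε, G₂ y) - 2 * f x * (∫ y in S ε, G₁ y)) := by ring
      _ = CNs N s * m ^ ν * (- ∫ y in S ε, q y) := by rw [e1]
      _ = -(CNs N s * m ^ ν) * ∫ y in S ε, q y := by ring
  have hlim2 : Tendsto (fun ε : ℝ => -(CNs N s * m ^ ν) * ∫ y in S ε, q y)
      (nhdsWithin 0 (Set.Ioi 0)) (𝓝 (-(CNs N s * m ^ ν) * T)) := hkey.const_mul _
  have hkeyeq : (Lf2 x - m ^ (2 * s) * f x ^ 2) - 2 * f x * (Lf x - m ^ (2 * s) * f x)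
      = -(CNs N s * m ^ ν) * T :=
    tendsto_nhds_unique (Filter.Tendsto.congr' heqev hprod) hlim2
  have hfin : Lf2 x - 2 * f x * Lf x = -(CNs N s) * m ^ ν * T - m ^ (2 * s) * f x ^ 2 := by
    linear_combination hkeyeq
  have hCN := CNs_pos (N := N) hs0 hs1
  have hmν : (0:ℝ) < m ^ ν := Real.rpow_pos_of_pos hm ν
  have hm2s : (0:ℝ) < m ^ (2 * s) := Real.rpow_pos_of_pos hm _
  have hineq : Lf2 x - 2 * f x * Lf x ≤ 0 := by
    rw [hfin]
    have h1 : 0 ≤ CNs N s * m ^ ν * T := by positivity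
    have h2 : 0 ≤ m ^ (2 * s) * f x ^ 2 := by positivity
    linarith
  exact ⟨hfin, hineq, by linarith⟩
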